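/- Let λ = (λ_1,…,λ_n) be a partition of n, set d_i = λ_i + n − i and P = {d_1,…,d_n}. Then for every i with 1 ≤ i ≤ n, the set {j : 1 ≤ j ≤ d_i and d_i − j ∉ P} equals the set of hook lengths of the i-th row of the Young diagram of λ, i.e. equals {h(i,j) : 1 ≤ j ≤ λ_i}. -/

import Mathlib

/-- `d_i = λ_i + n − i`, with rows indexed by `i : Fin n` (so `i` stands for row `i+1`). -/
def dSeq (n : ℕ) (lam : Fin n → ℕ) (i : Fin n) : ℕ := lam i + (n - 1 - (i : ℕ))

/-- `P = {d_1, …, d_n}`. -/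
def dSet (n : ℕ) (lam : Fin n → ℕ) : Finset ℕ := Finset.image (dSeq n lam) Finset.univ

/-- `L_j`: the number of cells in column `j` of the Young diagram of `λ`. -/
def colLen (n : ℕ) (lam : Fin n → ℕ) (j : ℕ) : ℕ :=
  (Finset.univ.filter fun k : Fin n => j ≤ lam k).card

/-- The hook length `h(i,j) = λ_i − j + L_j − i + 1` of the cell in row `i+1`
(indexed by `i : Fin n`) and column `j`. -/
def hookLen (n : ℕ) (lam : Fin n → ℕ) (i : Fin n) (j : ℕ) : ℕ :=
  (lam i - j) + (colLen n lam j - ((i : ℕ) + 1)) + 1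

/-- A decidable predicate on `Fin n` that is downward closed holds exactly on the
initial segment whose length is the cardinality of its support. -/
lemma lower_iff {n : ℕ} (p : Fin n → Prop) [DecidablePred p]
    (h : ∀ k k' : Fin n, k' ≤ k → p k → p k') (k : Fin n) :
    p k ↔ (k : ℕ) < (Finset.univ.filter p).card := by
  constructor
  · intro hp
    have hsub : Finset.Iic k ⊆ Finset.univ.filter p := by
      intro k' hk'
      rw [Finset.mem_Iic] at hk'
      simp only [Finset.mem_filter, Finset.mem_univ, true_and]
      exact h k k' hk' hp
    have := Finset.card_le_card hsub
    rw [Fin.card_Iic] at this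
    omega
  · intro hk
    by_contra hnp
    have hsub : Finset.univ.filter p ⊆ Finset.Iio k := by
      intro k' hk'
      simp only [Finset.mem_filter, Finset.mem_univ, true_and] at hk'
      rw [Finset.mem_Iio]
      by_contra hle
      exact hnp (h k' k (le_of_not_gt hle) hk')
    have := Finset.card_le_card hsub
    rw [Fin.card_Iio] at this
    omega

lemma le_lam_iff {n : ℕ} {lam : Fin n → ℕ} (hanti : Antitone lam) (j : ℕ) (k : Fin n) :
    j ≤ lam k ↔ (k : ℕ) < colLen n lam j :=
  lower_iff (fun k => j ≤ lam k) (fun a b hle hp => le_trans hp (hanti hle)) k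

lemma colLen_le {n : ℕ} (lam : Fin n → ℕ) (j : ℕ) : colLen n lam j ≤ n := by
  classical
  have := Finset.card_filter_le (Finset.univ : Finset (Fin n)) (fun k => j ≤ lam k)
  exact this.trans (by simp)

lemma dSeq_anti {n : ℕ} {lam : Fin n → ℕ} (hanti : Antitone lam) :
    Antitone (dSeq n lam) := by
  intro a b hab
  have h1 : lam b ≤ lam a := hanti hab
  have h2 : (a : ℕ) ≤ b := hab
  unfold dSeq
  omega

lemma dSeq_strictAnti {n : ℕ} {lam : Fin n → ℕ} (hanti : Antitone lam)
    {a b : Fin n} (hab : a < b) : dSeq n lam b < dSeq n lam a := by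
  have h1 : lam b ≤ lam a := hanti hab.le
  have h2 : (a : ℕ) < b := hab
  have h3 : (b : ℕ) < n := b.isLt
  unfold dSeq
  omega

lemma dSeq_injective {n : ℕ} {lam : Fin n → ℕ} (hanti : Antitone lam) :
    Function.Injective (dSeq n lam) := by
  intro a b hab
  rcases lt_trichotomy a b with h | h | h
  · exact absurd hab (dSeq_strictAnti hanti h).ne'
  · exact h
  · exact absurd hab (dSeq_strictAnti hanti h).ne

/-- The numbers `(n - L_j) + (j-1)` for `j ≥ 1` are not in `P`. -/
lemma cval_not_mem {n : ℕ} {lam : Fin n → ℕ} (hanti : Antitone lam)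
    {j : ℕ} (hj : 1 ≤ j) : (n - colLen n lam j) + (j - 1) ∉ dSet n lam := by
  intro hmem
  rw [dSet, Finset.mem_image] at hmem
  obtain ⟨k, -, hk⟩ := hmem
  have hLn : colLen n lam j ≤ n := colLen_le lam j
  have hkn : (k : ℕ) < n := k.isLt
  by_cases hcase : j ≤ lam k
  · have hlt : (k : ℕ) < colLen n lam j := (le_lam_iff hanti j k).1 hcase
    unfold dSeq at hk
    omega
  · push_neg at hcase
    have hge : ¬ (k : ℕ) < colLen n lam j := fun h =>
      absurd ((le_lam_iff hanti j k).2 h) (by omega)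
    unfold dSeq at hk
    omega

/-- Lemma 2: the set `{j : 1 ≤ j ≤ d_i, d_i − j ∉ P}` equals the set of hook lengths
of the `i`-th row of the Young diagram of `λ`. -/
theorem filter_not_mem_dSet_eq_hookLengths (n : ℕ) (lam : Fin n → ℕ)
    (hanti : Antitone lam) (hsum : ∑ i, lam i = n) (i : Fin n) :
    (Finset.Icc 1 (dSeq n lam i)).filter (fun j => dSeq n lam i - j ∉ dSet n lam)
      = (Finset.Icc 1 (lam i)).image (fun j => hookLen n lam i j) := by
  classical
  have hin : (i : ℕ) < n := i.isLt
  ext m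
  simp only [Finset.mem_filter, Finset.mem_Icc, Finset.mem_image]
  constructor
  · rintro ⟨⟨hm1, hmD⟩, hnot⟩
    set D := dSeq n lam i with hD
    set c := D - m with hc
    set t := (Finset.univ.filter (fun k => c < dSeq n lam k)).card with ht
    have htn : t ≤ n := by
      have := Finset.card_filter_le (Finset.univ : Finset (Fin n))
        (fun k => c < dSeq n lam k)
      simpa [ht] using this
    have hdlt : ∀ k : Fin n, c < dSeq n lam k ↔ (k : ℕ) < t := by
      intro k
      exact lower_iff _ (fun a b hle hp => lt_of_lt_of_le hp (dSeq_anti hanti hle)) k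
    -- `c ∉ P`
    have hcP : ∀ k : Fin n, dSeq n lam k ≠ c := by
      intro k hk
      exact hnot (by rw [dSet, Finset.mem_image]; exact ⟨k, Finset.mem_univ k, hk⟩)
    -- count of the complement: `n - t ≤ c`
    have hnt : n - t ≤ c := by
      set S := Finset.univ.filter (fun k => ¬ c < dSeq n lam k) with hS
      have hcard : t + S.card = n := by
        have := Finset.card_filter_add_card_filter_not
          (s := (Finset.univ : Finset (Fin n))) (p := fun k => c < dSeq n lam k)
        simpa [ht, hS] using this
      have himg : S.image (dSeq n lam) ⊆ Finset.range c := by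
        intro x hx
        rw [Finset.mem_image] at hx
        obtain ⟨k, hk, rfl⟩ := hx
        rw [hS, Finset.mem_filter] at hk
        have h1 : dSeq n lam k ≤ c := le_of_not_gt hk.2
        have h2 : dSeq n lam k ≠ c := hcP k
        rw [Finset.mem_range]
        omega
      have hcardimg : S.card = (S.image (dSeq n lam)).card :=
        (Finset.card_image_of_injective S (dSeq_injective hanti)).symm
      have := Finset.card_le_card himg
      rw [Finset.card_range] at this
      omega
    set j := c + 1 - (n - t) with hj
    have hj1 : 1 ≤ j := by omega
    -- the key equivalence
    have key : ∀ k : Fin n, j ≤ lam k ↔ (k : ℕ) < t := by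
      intro k
      have hkn : (k : ℕ) < n := k.isLt
      constructor
      · intro hjk
        by_contra hkt
        push_neg at hkt
        have htn' : t < n := lt_of_le_of_lt hkt hkn
        set b : Fin n := ⟨t, htn'⟩ with hb
        have hbk : b ≤ k := by
          rw [Fin.le_def]; exact hkt
        have h1 : lam k ≤ lam b := hanti hbk
        have h2 : ¬ c < dSeq n lam b := by
          rw [hdlt b]; simp [hb]
        have h3 : dSeq n lam b ≠ c := hcP b
        have h4 : dSeq n lam b = lam b + (n - 1 - t) := by simp [dSeq, hb]
        omega
      · intro hkt
        have ht1 : 1 ≤ t := by omega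
        have htn' : t - 1 < n := by omega
        set b : Fin n := ⟨t - 1, htn'⟩ with hb
        have hkb : k ≤ b := by
          rw [Fin.le_def]; simp [hb]; omega
        have h1 : lam b ≤ lam k := hanti hkb
        have h2 : c < dSeq n lam b := by
          rw [hdlt b]; simp [hb]; omega
        have h4 : dSeq n lam b = lam b + (n - 1 - (t - 1)) := by simp [dSeq, hb]
        omega
    have hLt : colLen n lam j = t := by
      rw [colLen, ht]
      congr 1
      ext k
      simp only [Finset.mem_filter, Finset.mem_univ, true_and]
      rw [key k, hdlt k]
    -- `c < D`, hence `i < t`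
    have hcD : c < D := by omega
    have hit : (i : ℕ) < t := (hdlt i).1 hcD
    have hji : j ≤ lam i := (key i).2 hit
    refine ⟨j, ⟨hj1, hji⟩, ?_⟩
    have hDdef : D = lam i + (n - 1 - (i : ℕ)) := rfl
    rw [hookLen, hLt]
    omega
  · rintro ⟨j, ⟨hj1, hji⟩, rfl⟩
    have hiL : (i : ℕ) < colLen n lam j := (le_lam_iff hanti j i).1 hji
    have hLn : colLen n lam j ≤ n := colLen_le lam j
    have hDdef : dSeq n lam i = lam i + (n - 1 - (i : ℕ)) := rfl
    have hHdef : hookLen n lam i j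
        = (lam i - j) + (colLen n lam j - ((i : ℕ) + 1)) + 1 := rfl
    have hcval : dSeq n lam i - hookLen n lam i j
        = (n - colLen n lam j) + (j - 1) := by
      rw [hDdef, hHdef]; omega
    refine ⟨⟨by rw [hHdef]; omega, by rw [hDdef, hHdef]; omega⟩, ?_⟩
    rw [hcval]
    exact cval_not_mem hanti hj1
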